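/- For every integer m ≥ 3 not divisible by 4, every distance magic labeling ℓ of the wreath graph W(m) satisfies ℓ(x_i) + ℓ(y_i) = 0 for all i ∈ Z_m. -/

import Mathlib

open Finset

/-- The label set `I_n = {1-n, 3-n, ..., n-1}`. -/
def ISet (n : ℕ) : Finset ℤ := (Finset.range n).image (fun i : ℕ => 2 * (i : ℤ) + 1 - n)

open scoped Classical in
/-- Sum of the labels over the neighborhood of `w`. -/
noncomputable def nbrSum {V : Type*} [Fintype V] (G : SimpleGraph V) (ℓ : V → ℤ) (w : V) : ℤ :=
  ∑ x ∈ Finset.univ.filter (fun x => G.Adj w x), ℓ x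

open scoped Classical in
/-- The degree of a vertex. -/
noncomputable def gdeg {V : Type*} [Fintype V] (G : SimpleGraph V) (w : V) : ℕ :=
  (Finset.univ.filter (fun x => G.Adj w x)).card

/-- A distance magic labeling: a bijection onto `I_n` with all neighborhood sums `0`. -/
def IsDML {V : Type*} [Fintype V] (G : SimpleGraph V) (ℓ : V → ℤ) : Prop :=
  Function.Injective ℓ ∧ (∀ x, ℓ x ∈ ISet (Fintype.card V)) ∧
    (∀ i ∈ ISet (Fintype.card V), ∃ x, ℓ x = i) ∧ ∀ w, nbrSum G ℓ w = 0

/-- The wreath graph `W(m)`: vertices `(i, b)` with `b = false` for `x_i` and `b = true` for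
`y_i`; each of `x_i, y_i` is adjacent to each of `x_{i±1}, y_{i±1}` (indices mod `m`). -/
def wreath (m : ℕ) : SimpleGraph (ZMod m × Bool) where
  Adj p q := p ≠ q ∧ (p.1 = q.1 + 1 ∨ q.1 = p.1 + 1)
  symm := ⟨fun p q h => ⟨h.1.symm, h.2.symm⟩⟩
  loopless := ⟨fun p h => h.1 rfl⟩

/-- If `m ≥ 3` is not divisible by `4`, then every distance magic labeling `ℓ` of the wreath
graph `W(m)` satisfies `ℓ(x_i) + ℓ(y_i) = 0` for all `i`. -/
lemma wreath_adj (m : ℕ) (p q : ZMod m × Bool) :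
    (wreath m).Adj p q ↔ p ≠ q ∧ (p.1 = q.1 + 1 ∨ q.1 = p.1 + 1) := Iff.rfl

theorem wreath_not_four_dvd_paired (m : ℕ) [NeZero m] (hm : 3 ≤ m) (h4 : ¬ (4 ∣ m))
    (ℓ : ZMod m × Bool → ℤ) (hdm : IsDML (wreath m) ℓ) :
    ∀ i : ZMod m, ℓ (i, false) + ℓ (i, true) = 0 := by
  classical
  obtain ⟨-, -, -, hz⟩ := hdm
  set s : ZMod m → ℤ := fun j => ℓ (j, false) + ℓ (j, true) with hs
  have h2ne : (2 : ZMod m) ≠ 0 := by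
    have : ((2 : ℕ) : ZMod m) ≠ 0 := fun h =>
      absurd (Nat.le_of_dvd (by norm_num) ((ZMod.natCast_eq_zero_iff 2 m).1 h))
        (by omega)
    simpa using this
  have h1ne : (1 : ZMod m) ≠ 0 := by
    have : ((1 : ℕ) : ZMod m) ≠ 0 := fun h =>
      absurd (Nat.le_of_dvd (by norm_num) ((ZMod.natCast_eq_zero_iff 1 m).1 h))
        (by omega)
    simpa using this
  have hdiff : ∀ i : ZMod m, i - 1 ≠ i + 1 := by
    intro i h
    exact h2ne (by linear_combination -h)
  have hne1 : ∀ i : ZMod m, i ≠ i - 1 := by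
    intro i h
    exact h1ne (by linear_combination h)
  have hne2 : ∀ i : ZMod m, i ≠ i + 1 := by
    intro i h
    exact h1ne (by linear_combination -h)
  have key : ∀ i : ZMod m, s (i - 1) + s (i + 1) = 0 := by
    intro i
    have hzi := hz (i, false)
    rw [nbrSum] at hzi
    have hset : (Finset.univ.filter (fun q => (wreath m).Adj (i, false) q)) =
        ({(i-1, false), (i-1, true), (i+1, false), (i+1, true)} : Finset (ZMod m × Bool)) := by
      ext ⟨j, c⟩
      simp only [Finset.mem_filter, Finset.mem_univ, true_and, wreath_adj,
        Finset.mem_insert, Finset.mem_singleton, Prod.mk.injEq, ne_eq]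
      constructor
      · rintro ⟨hne, h | h⟩
        · have hj : j = i - 1 := by linear_combination -h
          cases c <;> simp [hj]
        · have hj : j = i + 1 := h
          cases c <;> simp [hj]
      · rintro (⟨h1, h2⟩ | ⟨h1, h2⟩ | ⟨h1, h2⟩ | ⟨h1, h2⟩) <;> subst h1 <;>
          refine ⟨by simp [Prod.ext_iff, (hne1 i), (hne2 i)], ?_⟩
        · left; ring
        · left; ring
        · right; rfl
        · right; rfl
    rw [hset] at hzi
    rw [Finset.sum_insert (by simp [Prod.ext_iff, hdiff i]),
        Finset.sum_insert (by simp [Prod.ext_iff, hdiff i]),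
        Finset.sum_insert (by simp [Prod.ext_iff, hdiff i]),
        Finset.sum_singleton] at hzi
    simp only [hs]
    linarith [hzi]
  have step : ∀ j : ZMod m, s (j + 2) = - s j := by
    intro j
    have h := key (j + 1)
    have e1 : j + 1 - 1 = j := by ring
    have e2 : j + 1 + 1 = j + 2 := by ring
    rw [e1, e2] at h
    linarith
  have pow : ∀ (k : ℕ) (j : ZMod m), s (j + 2 * (k : ZMod m)) = (-1 : ℤ) ^ k * s j := by
    intro k
    induction k with
    | zero => intro j; simp
    | succ n ih =>
      intro j
      have e : (j + 2 * ((n + 1 : ℕ) : ZMod m)) = (j + 2) + 2 * (n : ZMod m) := by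
        push_cast; ring
      rw [e, ih, step, pow_succ]
      ring
  obtain ⟨k, hk_odd, hdvd⟩ : ∃ k : ℕ, Odd k ∧ m ∣ 2 * k := by
    rcases Nat.even_or_odd m with he | ho
    · obtain ⟨n, hn⟩ := he
      exact ⟨n, Nat.odd_iff.2 (by omega), ⟨1, by omega⟩⟩
    · exact ⟨m, ho, ⟨2, by ring⟩⟩
  intro i
  have hcast : (2 : ZMod m) * (k : ZMod m) = 0 := by
    have : ((2 * k : ℕ) : ZMod m) = 0 := by
      rw [ZMod.natCast_eq_zero_iff]; exact hdvd
    push_cast at this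
    exact this
  have hp := pow k i
  rw [hcast, add_zero, hk_odd.neg_one_pow] at hp
  have : ℓ (i, false) + ℓ (i, true) = s i := rfl
  rw [this]
  linarith
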